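/- Let Ω be a type, K, N ≥ 1 natural numbers, φ : Fin K → (Ω → ℂ) a linearly independent family of functions, and X : (Fin N → Fin K) → ℂ a tensor. Define f : (Fin N → Ω) → ℂ by f(r) = ∑_{k : Fin N → Fin K} X(k) · ∏_j φ_{k(j)}(r(j)). If f is antisymmetric, i.e., f(r ∘ π) = sgn(π) · f(r) for every permutation π of Fin N and every r, then X is antisymmetric, i.e., X(k ∘ π) = sgn(π) · X(k) for every permutation π and every k; moreover, if f is not identically zero then X is not identically zero. -/
import Mathlib


open scoped BigOperators

/-- The CP (canonical polyadic) rank of an `N`-th order tensor of dimension `K` over `ℂ`: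
the least `p` such that the tensor is a sum of `p` elementary tensor products. -/
noncomputable def cpRank {N K : ℕ} (X : (Fin N → Fin K) → ℂ) : ℕ :=
  sInf {p : ℕ | ∃ x : Fin p → Fin N → Fin K → ℂ,
    ∀ k : Fin N → Fin K, X k = ∑ i, ∏ j, x i j (k j)}

/-- An `N`-th order tensor is antisymmetric if it changes sign under any permutation
of its indices according to the sign of the permutation. -/
def IsAntisymTensor {N K : ℕ} (X : (Fin N → Fin K) → ℂ) : Prop :=
  ∀ (π : Equiv.Perm (Fin N)) (k : Fin N → Fin K),
    X (k ∘ π) = ((Equiv.Perm.sign π : ℤ) : ℂ) * X k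

/-- The determinant tensor: `E ℓ = sgn ℓ` if `ℓ` is a permutation of `Fin N`, `0` otherwise. -/
noncomputable def detTensor (N : ℕ) : (Fin N → Fin N) → ℂ :=
  fun ℓ => ∑ π : Equiv.Perm (Fin N),
    if ℓ = ⇑π then ((Equiv.Perm.sign π : ℤ) : ℂ) else 0

/-- The basis antisymmetric tensor associated with `u : Fin N → Fin K`:
`E_u ℓ = sgn π` if `ℓ = u ∘ π` for a (necessarily unique, when `u` is injective)
permutation `π` of `Fin N`, and `0` otherwise. -/
noncomputable def basisTensor {N K : ℕ} (u : Fin N → Fin K) : (Fin N → Fin K) → ℂ :=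
  fun ℓ => ∑ π : Equiv.Perm (Fin N),
    if ℓ = u ∘ ⇑π then ((Equiv.Perm.sign π : ℤ) : ℂ) else 0

/-- A function on `N`-tuples is antisymmetric if it changes sign under any permutation
of its arguments according to the sign of the permutation. -/
def IsAntisymFun {N : ℕ} {Ω : Type*} (f : (Fin N → Ω) → ℂ) : Prop :=
  ∀ (π : Equiv.Perm (Fin N)) (r : Fin N → Ω),
    f (r ∘ π) = ((Equiv.Perm.sign π : ℤ) : ℂ) * f r

set_option maxHeartbeats 1000000 in
lemma prod_li_aux {Ω : Type*} {K : ℕ}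
    (φ : Fin K → Ω → ℂ) (hφ : LinearIndependent ℂ φ) :
    ∀ (N : ℕ) (c : (Fin N → Fin K) → ℂ),
      (∀ r : Fin N → Ω, ∑ k : Fin N → Fin K, c k * ∏ j, φ (k j) (r j) = 0) →
      ∀ k, c k = 0 := by
  intro N
  induction N with
  | zero =>
    intro c h k
    have hk : c k = c default := by congr 1; exact Subsingleton.elim _ _
    rw [hk]
    simpa using h (fun j => j.elim0)
  | succ N ih =>
    intro c h k
    have key : ∀ (i : Fin K) (r' : Fin N → Ω),
        ∑ k' : Fin N → Fin K, c (Fin.cons i k') * ∏ j, φ (k' j) (r' j) = 0 := by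
      intro i r'
      have hsum : ∀ ω : Ω,
          ∑ i : Fin K, (∑ k' : Fin N → Fin K, c (Fin.cons i k') * ∏ j, φ (k' j) (r' j))
            * φ i ω = 0 := by
        intro ω
        calc ∑ i : Fin K, (∑ k' : Fin N → Fin K,
                c (Fin.cons i k') * ∏ j, φ (k' j) (r' j)) * φ i ω
            = ∑ p : Fin K × (Fin N → Fin K), c (Fin.cons p.1 p.2) *
                ∏ j : Fin (N+1), φ ((Fin.cons p.1 p.2 : Fin (N+1) → Fin K) j)
                  ((Fin.cons ω r' : Fin (N+1) → Ω) j) := by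
              rw [Fintype.sum_prod_type]
              refine Finset.sum_congr rfl fun i _ => ?_
              rw [Finset.sum_mul]
              refine Finset.sum_congr rfl fun k' _ => ?_
              rw [Fin.prod_univ_succ]
              simp only [Fin.cons_zero, Fin.cons_succ]
              ring
          _ = ∑ m : Fin (N+1) → Fin K, c m *
                ∏ j : Fin (N+1), φ (m j) ((Fin.cons ω r' : Fin (N+1) → Ω) j) :=
              Fintype.sum_equiv (Fin.consEquiv fun _ => Fin K) _ _ (fun p => by
                simp [Fin.consEquiv])
          _ = 0 := h (Fin.cons ω r')
      have hli := Fintype.linearIndependent_iff.mp hφ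
        (fun i => ∑ k' : Fin N → Fin K, c (Fin.cons i k') * ∏ j, φ (k' j) (r' j))
      have hz : ∑ i : Fin K,
          (∑ k' : Fin N → Fin K, c (Fin.cons i k') * ∏ j, φ (k' j) (r' j)) • φ i = 0 := by
        funext ω
        simpa [Finset.sum_apply] using hsum ω
      exact hli hz i
    have := ih (fun k' => c (Fin.cons (k 0) k')) (key (k 0)) (Fin.tail k)
    simpa [Fin.cons_self_tail] using this

theorem antisym_fun_implies_antisym_tensor {Ω : Type*} {K N : ℕ}
    (hK : 1 ≤ K) (hN : 1 ≤ N)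
    (φ : Fin K → Ω → ℂ) (hφ : LinearIndependent ℂ φ)
    (X : (Fin N → Fin K) → ℂ) (f : (Fin N → Ω) → ℂ)
    (hf : ∀ r : Fin N → Ω, f r = ∑ k : Fin N → Fin K, X k * ∏ j, φ (k j) (r j))
    (hanti : IsAntisymFun f) :
    IsAntisymTensor X ∧ (f ≠ 0 → X ≠ 0) := by
  constructor
  · intro π k
    have hrel : ∀ r : Fin N → Ω,
        ∑ m : Fin N → Fin K, (X (m ∘ π) - ((Equiv.Perm.sign π : ℤ) : ℂ) * X m)
          * ∏ j, φ (m j) (r j) = 0 := by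
      intro r
      have h1 := hanti π r
      rw [hf, hf] at h1
      have h2 : ∑ m : Fin N → Fin K, X (m ∘ π) * ∏ j, φ (m j) (r j)
          = ∑ k : Fin N → Fin K, X k * ∏ j, φ (k j) ((r ∘ π) j) := by
        apply Fintype.sum_equiv (Equiv.arrowCongr π.symm (Equiv.refl (Fin K)))
        intro m
        rw [← Equiv.prod_comp π (fun j => φ (m j) (r j))]
        simp [Equiv.arrowCongr, Function.comp]
      simp only [sub_mul, Finset.sum_sub_distrib, mul_assoc, ← Finset.mul_sum]
      rw [h2, ← h1]
      ring
    have := prod_li_aux φ hφ N _ hrel k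
    exact sub_eq_zero.mp this
  · intro hfne hX
    exact hfne (funext fun r => by rw [hf]; simp [hX])
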